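/- There exists a probability space (Ω,ℱ,ℙ) and events E_n, n ∈ ℕ, with ℙ(E_n) ≤ (log n)^{-1} for all n ≥ 2, such that almost surely the set {n ∈ ℕ : ω ∈ E_n} has positive upper density. -/

import Mathlib

open Filter MeasureTheory

namespace BCDS

/-- Start of round `m` in exponent scale. -/
def e (m : ℕ) : ℕ := 4 * 5 ^ m
/-- Number of pieces in round `m`. -/
def K (m : ℕ) : ℕ := 16 * 5 ^ m
/-- Round index of `n`. -/
def Mn (n : ℕ) : ℕ := Nat.log 5 (Nat.log 2 n / 4)
/-- Piece index of `n` within its round. -/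
def In (n : ℕ) : ℕ := Nat.log 2 n - e (Mn n)

noncomputable def E (n : ℕ) : Set ℝ :=
  if 16 ≤ n then Set.Ico ((In n : ℝ) / (K (Mn n) : ℝ)) (((In n : ℝ) + 1) / (K (Mn n) : ℝ)) else ∅

lemma K_pos (m : ℕ) : 0 < K m := by unfold K; positivity

lemma log_ge (n : ℕ) (hn : 16 ≤ n) : 4 ≤ Nat.log 2 n := by
  exact (Nat.le_log_iff_pow_le (by norm_num) (by omega)).2 (by norm_num [hn])

lemma Mn_spec (n : ℕ) (hn : 16 ≤ n) :
    e (Mn n) ≤ Nat.log 2 n ∧ Nat.log 2 n < e (Mn n + 1) := by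
  set J := Nat.log 2 n with hJ
  have hJ4 : 4 ≤ J := log_ge n hn
  have h1 : 5 ^ (Mn n) ≤ J / 4 :=
    Nat.pow_log_le_self 5 (by omega)
  have h2 : J / 4 < 5 ^ (Mn n + 1) := Nat.lt_pow_succ_log_self (by norm_num) _
  constructor
  · have := (Nat.le_div_iff_mul_le (by norm_num : 0 < 4)).1 h1
    simp only [e]; omega
  · have := (Nat.div_lt_iff_lt_mul (by norm_num : 0 < 4)).1 h2
    simp only [e]; omega

lemma In_lt (n : ℕ) (hn : 16 ≤ n) : In n < K (Mn n) := by
  obtain ⟨h1, h2⟩ := Mn_spec n hn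
  simp only [In, e, K, pow_succ] at *
  omega

/-- Block identification lemma. -/
lemma block_id (m i : ℕ) (hi : i < K m) (n : ℕ)
    (hn1 : 2 ^ (e m + i) ≤ n) (hn2 : n < 2 ^ (e m + i + 1)) :
    Mn n = m ∧ In n = i ∧ 16 ≤ n := by
  have hJ : Nat.log 2 n = e m + i := Nat.log_eq_of_pow_le_of_lt_pow hn1 hn2
  have h16 : 16 ≤ n := le_trans (by calc (16:ℕ) = 2^4 := by norm_num
    _ ≤ 2 ^ (e m + i) := Nat.pow_le_pow_right (by norm_num)
      (by have h5 : 1 ≤ 5^m := Nat.one_le_pow _ _ (by norm_num); simp [e]; omega)) hn1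
  have hM : Mn n = m := by
    have hlow : 5 ^ m ≤ (e m + i) / 4 := by
      rw [Nat.le_div_iff_mul_le (by norm_num : 0 < 4)]
      simp [e]; omega
    have hhigh : (e m + i) / 4 < 5 ^ (m + 1) := by
      rw [Nat.div_lt_iff_lt_mul (by norm_num : 0 < 4)]
      simp only [e, K, pow_succ] at *
      omega
    simp [Mn, hJ, Nat.log_eq_of_pow_le_of_lt_pow hlow hhigh]
  refine ⟨hM, ?_, h16⟩
  simp [In, hJ, hM]

lemma E_measurable (n : ℕ) : MeasurableSet (E n) := by
  unfold E; split
  · exact measurableSet_Ico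
  · exact MeasurableSet.empty

noncomputable def μ : Measure ℝ := volume.restrict (Set.Ico 0 1)

instance : IsProbabilityMeasure μ := by
  constructor
  rw [μ, Measure.restrict_apply_univ, Real.volume_Ico]
  norm_num

lemma E_subset (n : ℕ) : E n ⊆ Set.Ico (0:ℝ) 1 := by
  unfold E; split
  · rename_i hn
    have hi := In_lt n hn
    have hK : (0:ℝ) < K (Mn n) := by exact_mod_cast K_pos (Mn n)
    intro x hx
    obtain ⟨h1, h2⟩ := hx
    constructor
    · exact le_trans (by positivity) h1
    · refine lt_of_lt_of_le h2 ?_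
      rw [div_le_one hK]
      have : (In n : ℝ) + 1 ≤ K (Mn n) := by exact_mod_cast hi
      linarith
  · simp

lemma E_measure (n : ℕ) (hn : 16 ≤ n) : μ (E n) = ENNReal.ofReal (K (Mn n) : ℝ)⁻¹ := by
  rw [μ, Measure.restrict_apply (E_measurable n),
    Set.inter_eq_self_of_subset_left (E_subset n)]
  unfold E
  rw [if_pos hn, Real.volume_Ico]
  congr 1
  have hK : (0:ℝ) < K (Mn n) := by exact_mod_cast K_pos (Mn n)
  field_simp
  ring

lemma E_bound (n : ℕ) (hn : 2 ≤ n) : μ (E n) ≤ ENNReal.ofReal ((Real.log n)⁻¹) := by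
  by_cases h16 : 16 ≤ n
  · rw [E_measure n h16]
    apply ENNReal.ofReal_le_ofReal
    have hlogpos : 0 < Real.log n :=
      Real.log_pos (by exact_mod_cast lt_of_lt_of_le (by norm_num : (1:ℕ) < 16) h16)
    have hK : (0:ℝ) < K (Mn n) := by exact_mod_cast K_pos (Mn n)
    rw [inv_le_inv₀ hK hlogpos]
    -- log n ≤ K (Mn n)
    obtain ⟨_, h2⟩ := Mn_spec n h16
    have hnlt : (n:ℝ) < 2 ^ (Nat.log 2 n + 1) := by
      exact_mod_cast Nat.lt_pow_succ_log_self (by norm_num) n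
    have hlog : Real.log n ≤ (Nat.log 2 n + 1) * Real.log 2 := by
      calc Real.log n ≤ Real.log (2 ^ (Nat.log 2 n + 1)) :=
            Real.log_le_log (by positivity) hnlt.le
        _ = (Nat.log 2 n + 1) * Real.log 2 := by
            rw [Real.log_pow]; push_cast; ring
    have hJ : (Nat.log 2 n + 1 : ℝ) ≤ 20 * 5 ^ (Mn n) := by
      have : Nat.log 2 n + 1 ≤ 20 * 5 ^ (Mn n) := by
        simp only [e, pow_succ] at h2; omega
      exact_mod_cast this
    have hlog2 : Real.log 2 < 0.7 := lt_trans Real.log_two_lt_d9 (by norm_num)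
    calc Real.log n ≤ (Nat.log 2 n + 1) * Real.log 2 := hlog
      _ ≤ (20 * 5 ^ (Mn n)) * 0.7 := by
          apply mul_le_mul hJ hlog2.le (Real.log_nonneg (by norm_num)) (by positivity)
      _ ≤ (K (Mn n) : ℝ) := by
          simp only [K]; push_cast; ring_nf; nlinarith [pow_pos (by norm_num : (0:ℝ) < 5) (Mn n)]
  · have : E n = ∅ := by unfold E; rw [if_neg h16]
    simp [this]

/-- Every `ω ∈ [0,1)` lies in `E n` for every `n` in a full dyadic block of round `m`. -/
lemma hit (ω : ℝ) (hω : ω ∈ Set.Ico (0:ℝ) 1) (m : ℕ) :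
    ∃ j, e m ≤ j ∧ ∀ n, 2 ^ j ≤ n → n < 2 ^ (j + 1) → ω ∈ E n := by
  set i := ⌊ω * K m⌋₊ with hidef
  have hK : (0:ℝ) < K m := by exact_mod_cast K_pos m
  have hωK : 0 ≤ ω * K m := mul_nonneg hω.1 hK.le
  have hi : i < K m := by
    have : ω * K m < K m := by nlinarith [hω.2]
    exact_mod_cast Nat.floor_lt hωK |>.2 (by exact_mod_cast this)
  refine ⟨e m + i, Nat.le_add_right _ _, fun n hn1 hn2 => ?_⟩
  obtain ⟨hM, hI, h16⟩ := block_id m i hi n hn1 hn2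
  unfold E
  rw [if_pos h16, hM, hI]
  constructor
  · rw [div_le_iff₀ hK]
    calc (i:ℝ) ≤ ω * K m := Nat.floor_le hωK
      _ = ω * K m := rfl
  · rw [lt_div_iff₀ hK]
    exact Nat.lt_floor_add_one (ω * K m) |>.trans_le (by norm_num [hidef])

end BCDS

/-- Sharpness of Borel–Cantelli in density: there are events with `ℙ(E_n) ≤ (log n)⁻¹` such
that almost surely the set `{n : ω ∈ E_n}` has positive upper density. -/
theorem borel_cantelli_in_density_sharp :
    ∃ (Ω : Type) (_ : MeasurableSpace Ω) (μ : Measure Ω) (_ : IsProbabilityMeasure μ)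
      (E : ℕ → Set Ω),
      (∀ n, MeasurableSet (E n)) ∧
      (∀ n : ℕ, 2 ≤ n → μ (E n) ≤ ENNReal.ofReal ((Real.log n)⁻¹)) ∧
      ∀ᵐ ω ∂μ, 0 < Filter.limsup
        (fun N : ℕ => (N : ℝ)⁻¹ * ∑ n ∈ Finset.Icc 1 N, (E n).indicator (fun _ => (1 : ℝ)) ω)
        atTop := by
  classical
  refine ⟨ℝ, inferInstance, BCDS.μ, inferInstance, BCDS.E, BCDS.E_measurable, BCDS.E_bound, ?_⟩
  have hae : ∀ᵐ ω ∂BCDS.μ, ω ∈ Set.Ico (0:ℝ) 1 := by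
    rw [BCDS.μ]; exact ae_restrict_mem measurableSet_Ico
  filter_upwards [hae] with ω hω
  set f : ℕ → ℝ :=
    fun N => (N:ℝ)⁻¹ * ∑ n ∈ Finset.Icc 1 N, (BCDS.E n).indicator (fun _ => (1:ℝ)) ω with hf
  have hindle : ∀ n, (BCDS.E n).indicator (fun _ => (1:ℝ)) ω ≤ 1 := by
    intro n; rw [Set.indicator_apply]; split <;> norm_num
  have hindnn : ∀ n, 0 ≤ (BCDS.E n).indicator (fun _ => (1:ℝ)) ω := by
    intro n; rw [Set.indicator_apply]; split <;> norm_num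
  have hb : IsBoundedUnder (· ≤ ·) atTop f := by
    refine isBoundedUnder_of ⟨1, fun N => ?_⟩
    have hsum : ∑ n ∈ Finset.Icc 1 N, (BCDS.E n).indicator (fun _ => (1:ℝ)) ω ≤ N := by
      calc ∑ n ∈ Finset.Icc 1 N, (BCDS.E n).indicator (fun _ => (1:ℝ)) ω
          ≤ ∑ _n ∈ Finset.Icc 1 N, (1:ℝ) := Finset.sum_le_sum (fun n _ => hindle n)
        _ = N := by simp [Nat.card_Icc]
    rcases Nat.eq_zero_or_pos N with h0 | hN
    · simp [hf, h0]
    · have hNpos : (0:ℝ) < N := by exact_mod_cast hN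
      have h := mul_le_mul_of_nonneg_left hsum (by positivity : (0:ℝ) ≤ (N:ℝ)⁻¹)
      simp only [hf]
      calc (N:ℝ)⁻¹ * ∑ n ∈ Finset.Icc 1 N, (BCDS.E n).indicator (fun _ => (1:ℝ)) ω
          ≤ (N:ℝ)⁻¹ * N := h
        _ = 1 := inv_mul_cancel₀ hNpos.ne'
  have hfreq : ∃ᶠ N in atTop, (1/2 : ℝ) ≤ f N := by
    rw [frequently_atTop]
    intro a
    obtain ⟨j, hj, hω'⟩ := BCDS.hit ω hω a
    have hea : a ≤ BCDS.e a := by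
      have := Nat.lt_pow_self (n := a) (by norm_num : 1 < 5)
      simp only [BCDS.e]; omega
    have hjN : j + 1 < 2 ^ (j + 1) := Nat.lt_two_pow_self
    refine ⟨2 ^ (j+1), by omega, ?_⟩
    have hsub : Finset.Ico (2^j) (2^(j+1)) ⊆ Finset.Icc 1 (2^(j+1)) := by
      intro n hn
      simp only [Finset.mem_Ico, Finset.mem_Icc] at *
      have : 0 < 2^j := Nat.pow_pos (by norm_num)
      omega
    have hsum : (2^j : ℝ) ≤
        ∑ n ∈ Finset.Icc 1 (2^(j+1)), (BCDS.E n).indicator (fun _ => (1:ℝ)) ω := by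
      calc (2^j : ℝ) = ∑ _n ∈ Finset.Ico (2^j) (2^(j+1)), (1:ℝ) := by
            rw [Finset.sum_const, Nat.card_Ico,
              (by rw [pow_succ]; omega : 2^(j+1) - 2^j = 2^j)]
            simp
        _ = ∑ n ∈ Finset.Ico (2^j) (2^(j+1)), (BCDS.E n).indicator (fun _ => (1:ℝ)) ω := by
            refine Finset.sum_congr rfl (fun n hn => ?_)
            rw [Finset.mem_Ico] at hn
            rw [Set.indicator_of_mem (hω' n hn.1 hn.2)]
        _ ≤ _ := Finset.sum_le_sum_of_subset_of_nonneg hsub (fun n _ _ => hindnn n)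
    have hNpos : (0:ℝ) < ((2^(j+1) : ℕ) : ℝ) := by positivity
    simp only [hf]
    rw [le_inv_mul_iff₀ hNpos]
    calc ((2^(j+1):ℕ):ℝ) * (1/2) = (2^j : ℝ) := by push_cast [pow_succ]; ring
      _ ≤ _ := hsum
  have h12 := le_limsup_of_frequently_le hfreq hb
  linarith
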